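/- Let G be a connected graph, u, v ∈ V(G), and Y ⊆ N_G(u) \ (N_G(v) ∪ {v}) with Y ≠ ∅. Let G' = G − {uw : w ∈ Y} + {vw : w ∈ Y}. If X is a positive eigenvector of A_α(G) for λ_α(G) with x_v ≥ x_u, then λ_α(G') > λ_α(G) for α ∈ [0,1). -/

import Mathlib

open scoped Classical

/-- The matrix `A_α(G) = α·D(G) + (1−α)·A(G)` over `ℝ`. -/
noncomputable def Aalpha {V : Type*} [Fintype V] (G : SimpleGraph V) (α : ℝ) : Matrix V V ℝ :=
  α • Matrix.diagonal (fun v => (G.degree v : ℝ)) +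
    (1 - α) • (Matrix.of fun i j => if G.Adj i j then (1 : ℝ) else 0)

/-- `lam` is the largest real eigenvalue (spectral radius) of the real symmetric matrix `M`. -/
def IsSpectralRadius {V : Type*} [Fintype V] (M : Matrix V V ℝ) (lam : ℝ) : Prop :=
  (∃ x : V → ℝ, x ≠ 0 ∧ M.mulVec x = lam • x) ∧
    ∀ μ : ℝ, (∃ x : V → ℝ, x ≠ 0 ∧ M.mulVec x = μ • x) → μ ≤ lam

open scoped Matrix

/-- Rayleigh-type bound: for a Hermitian real matrix whose spectral radius is `lam`,
the quadratic form is bounded by `lam`, with the equality case recognizing eigenvectors. -/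
lemma quad_le' {V : Type*} [Fintype V] {M : Matrix V V ℝ} (hM : M.IsHermitian) {lam : ℝ}
    (h : IsSpectralRadius M lam) (x : V → ℝ) :
    M.mulVec x ⬝ᵥ x ≤ lam * (x ⬝ᵥ x) ∧
      (M.mulVec x ⬝ᵥ x = lam * (x ⬝ᵥ x) → M.mulVec x = lam • x) := by
  set b := hM.eigenvectorBasis with hb
  set μ := hM.eigenvalues with hμ
  have hdot : ∀ y z : V → ℝ,
      (inner (𝕜 := ℝ) ((WithLp.equiv 2 (V → ℝ)).symm y) ((WithLp.equiv 2 (V → ℝ)).symm z))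
        = y ⬝ᵥ z := by
    intro y z
    simp [dotProduct, PiLp.inner_apply, RCLike.inner_apply, conj_trivial, mul_comm]
  have hle : ∀ i, μ i ≤ lam := by
    intro i
    refine h.2 (μ i) ⟨(WithLp.equiv 2 (V → ℝ)) (b i), ?_, hM.mulVec_eigenvectorBasis i⟩
    intro hzero
    have : b i = 0 := by
      apply (WithLp.equiv 2 (V → ℝ)).injective
      simpa using hzero
    exact b.toBasis.ne_zero i (by simpa using this)
  set X : EuclideanSpace ℝ V := (WithLp.equiv 2 (V → ℝ)).symm x with hX
  set c : V → ℝ := fun i => b.repr X i with hc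
  set MX : EuclideanSpace ℝ V := (WithLp.equiv 2 (V → ℝ)).symm (M.mulVec x) with hMX
  have hreprM : ∀ i, b.repr MX i = μ i * c i := by
    intro i
    have hci : c i = (inner (𝕜 := ℝ) (b i) X) := b.repr_apply_apply X i
    rw [b.repr_apply_apply MX i, hci]
    have h1 : (inner (𝕜 := ℝ) (b i) MX) = ((WithLp.equiv 2 (V → ℝ)) (b i)) ⬝ᵥ (M.mulVec x) := by
      rw [← hdot]; simp [hMX]
    have h2 : ((WithLp.equiv 2 (V → ℝ)) (b i)) ⬝ᵥ (M.mulVec x)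
        = (M.mulVec ((WithLp.equiv 2 (V → ℝ)) (b i))) ⬝ᵥ x := by
      have hMt : Mᵀ = M := by
        rw [← Matrix.conjTranspose_eq_transpose_of_trivial, hM.eq]
      rw [Matrix.dotProduct_mulVec]
      congr 1
      nth_rewrite 1 [← hMt]
      rw [Matrix.vecMul_transpose]
    have h3 : (inner (𝕜 := ℝ) (b i) X) = ((WithLp.equiv 2 (V → ℝ)) (b i)) ⬝ᵥ x := by
      rw [← hdot]; simp [hX]
    rw [h1, h2, show (WithLp.equiv 2 (V → ℝ)) (b i) = (hM.eigenvectorBasis i).ofLp from rfl,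
      hM.mulVec_eigenvectorBasis i, smul_dotProduct]
    rw [h3]
    simp only [smul_eq_mul, hb, hμ]
    rfl
  have hMXdot : M.mulVec x ⬝ᵥ x = ∑ i, μ i * c i ^ 2 := by
    have := hdot (M.mulVec x) x
    rw [← this, ← hMX, ← hX, ← b.repr.inner_map_map MX X]
    simp only [PiLp.inner_apply, RCLike.inner_apply, conj_trivial]
    refine Finset.sum_congr rfl fun i _ => ?_
    rw [show b.repr MX i = μ i * c i from hreprM i]
    ring
  have hXdot : x ⬝ᵥ x = ∑ i, c i ^ 2 := by
    have := hdot x x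
    rw [← this, ← hX, ← b.repr.inner_map_map X X]
    simp only [PiLp.inner_apply, RCLike.inner_apply, conj_trivial]
    refine Finset.sum_congr rfl fun i _ => ?_
    ring
  have hterm : ∀ i ∈ Finset.univ, (0:ℝ) ≤ (lam - μ i) * c i ^ 2 := by
    intro i _
    exact mul_nonneg (by linarith [hle i]) (sq_nonneg _)
  have hdiff : lam * (x ⬝ᵥ x) - M.mulVec x ⬝ᵥ x = ∑ i, (lam - μ i) * c i ^ 2 := by
    rw [hMXdot, hXdot, Finset.mul_sum, ← Finset.sum_sub_distrib]
    exact Finset.sum_congr rfl fun i _ => by ring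
  constructor
  · nlinarith [Finset.sum_nonneg hterm, hdiff]
  · intro heq
    have hzero : ∀ i ∈ Finset.univ, (lam - μ i) * c i ^ 2 = 0 := by
      rw [← Finset.sum_eq_zero_iff_of_nonneg hterm]
      linarith [hdiff]
    have hrepr_eq : b.repr MX = b.repr (lam • X) := by
      refine PiLp.ext fun i => ?_
      have hsm : b.repr (lam • X) i = lam * c i := by
        rw [map_smul, PiLp.smul_apply, smul_eq_mul]
      rw [hreprM i, hsm]
      rcases mul_eq_zero.1 (hzero i (Finset.mem_univ i)) with h1 | h1
      · have h2 : μ i = lam := by linarith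
        rw [h2]
      · have h2 : c i = 0 := sq_eq_zero_iff.mp h1
        rw [h2]; ring
    have : MX = lam • X := b.repr.injective hrepr_eq
    have := congrArg (WithLp.equiv 2 (V → ℝ)) this
    simpa [hMX, hX] using this

lemma aalphaHerm {V : Type*} [Fintype V] (G : SimpleGraph V) (α : ℝ) :
    (Aalpha G α).IsHermitian := by
  ext i j
  by_cases h : i = j
  · subst h; simp [Aalpha]
  · simp [Aalpha, Matrix.conjTranspose_apply, Matrix.diagonal_apply, h, Ne.symm h,
      G.adj_comm j i]

lemma degree_sum' {V : Type*} [Fintype V] (H : SimpleGraph V) (a : V) :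
    (H.degree a : ℝ) = ∑ b, (if H.Adj a b then (1:ℝ) else 0) := by
  rw [SimpleGraph.degree, SimpleGraph.neighborFinset_eq_filter, Finset.card_filter]
  push_cast
  simp

lemma aalpha_mulVec {V : Type*} [Fintype V] (H : SimpleGraph V) (α : ℝ) (x : V → ℝ) (a : V) :
    (Aalpha H α).mulVec x a
      = α * (H.degree a : ℝ) * x a + (1-α) * ∑ b, (if H.Adj a b then (1:ℝ) else 0) * x b := by
  simp only [Aalpha, Matrix.mulVec, dotProduct, Matrix.add_apply, Matrix.smul_apply,
    Matrix.of_apply, Matrix.diagonal_apply, smul_eq_mul, add_mul, Finset.sum_add_distrib]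
  congr 1
  · simp only [mul_ite, ite_mul, zero_mul, mul_zero]
    rw [Finset.sum_ite_eq]
    simp
  · rw [Finset.mul_sum]
    congr 1; funext b; ring

lemma entry_id {V : Type*} [Fintype V] (G G' : SimpleGraph V) (u v : V) (Y : Set V)
    (huv : u ≠ v) (huY : u ∉ Y) (hvY : v ∉ Y)
    (hadj : ∀ w ∈ Y, G.Adj u w) (hnadj : ∀ w ∈ Y, ¬ G.Adj v w)
    (hG' : ∀ a b : V, G'.Adj a b ↔
      ((G.Adj a b ∧ ¬(a = u ∧ b ∈ Y) ∧ ¬(b = u ∧ a ∈ Y)) ∨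
        (a = v ∧ b ∈ Y) ∨ (b = v ∧ a ∈ Y)))
    (a b : V) :
    (if G'.Adj a b then (1:ℝ) else 0) = (if G.Adj a b then (1:ℝ) else 0)
      - (if a = u then (1:ℝ) else 0) * (if b ∈ Y then (1:ℝ) else 0)
      - (if b = u then (1:ℝ) else 0) * (if a ∈ Y then (1:ℝ) else 0)
      + (if a = v then (1:ℝ) else 0) * (if b ∈ Y then (1:ℝ) else 0)
      + (if b = v then (1:ℝ) else 0) * (if a ∈ Y then (1:ℝ) else 0) := by
  have hcomm := G.adj_comm
  by_cases haY : a ∈ Y <;> by_cases hbY : b ∈ Y <;>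
    by_cases hau : a = u <;> by_cases hbu : b = u <;>
      by_cases hav : a = v <;> by_cases hbv : b = v <;>
        simp_all [hG']

theorem stmt6 {V : Type*} [Fintype V] (G G' : SimpleGraph V) (hG : G.Connected)
    (u v : V) (Y : Set V)
    (hY : Y ⊆ G.neighborSet u \ (G.neighborSet v ∪ {v})) (hYne : Y.Nonempty)
    (hG' : ∀ a b : V, G'.Adj a b ↔
      ((G.Adj a b ∧ ¬(a = u ∧ b ∈ Y) ∧ ¬(b = u ∧ a ∈ Y)) ∨
        (a = v ∧ b ∈ Y) ∨ (b = v ∧ a ∈ Y)))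
    (α : ℝ) (hα : α ∈ Set.Ico (0 : ℝ) 1)
    (lam lam' : ℝ) (hlam : IsSpectralRadius (Aalpha G α) lam)
    (hlam' : IsSpectralRadius (Aalpha G' α) lam')
    (x : V → ℝ) (hx : ∀ w, 0 < x w)
    (hev : (Aalpha G α).mulVec x = lam • x)
    (hxy : x u ≤ x v) :
    lam < lam' := by
  obtain ⟨hα0, hα1⟩ := hα
  obtain ⟨w0, hw0⟩ := hYne
  -- basic facts
  have hadj : ∀ w ∈ Y, G.Adj u w := fun w hw => (hY hw).1
  have hnadj : ∀ w ∈ Y, ¬ G.Adj v w := by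
    intro w hw h
    exact (hY hw).2 (Or.inl h)
  have hwv : ∀ w ∈ Y, w ≠ v := by
    intro w hw h
    exact (hY hw).2 (Or.inr h)
  have huv : u ≠ v := by
    intro h
    exact hnadj w0 hw0 (h ▸ hadj w0 hw0)
  have huY : u ∉ Y := fun h => G.irrefl (hadj u h)
  have hvY : v ∉ Y := fun h => hwv v h rfl
  have E := entry_id G G' u v Y huv huY hvY hadj hnadj hG'
  set k : ℝ := ∑ b, (if b ∈ Y then (1:ℝ) else 0) with hkdef
  set S : ℝ := ∑ b, (if b ∈ Y then (1:ℝ) else 0) * x b with hSdef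
  -- degree identity
  have hdd : ∀ a, (G'.degree a : ℝ) = (G.degree a : ℝ)
      - (if a = u then (1:ℝ) else 0) * k + (if a = v then (1:ℝ) else 0) * k := by
    intro a
    rw [degree_sum', degree_sum']
    simp only [E]
    rw [Finset.sum_add_distrib, Finset.sum_add_distrib, Finset.sum_sub_distrib,
      Finset.sum_sub_distrib, ← Finset.mul_sum, ← Finset.mul_sum]
    simp only [ite_mul, one_mul, zero_mul, Finset.sum_ite_eq', Finset.mem_univ, if_true]
    rw [← hkdef]
    ring
  -- row identity
  have hrow : ∀ a, (Aalpha G' α).mulVec x a = (Aalpha G α).mulVec x a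
      + α * (((if a = v then (1:ℝ) else 0) - (if a = u then (1:ℝ) else 0)) * k) * x a
      + (1-α) * (((if a = v then (1:ℝ) else 0) - (if a = u then (1:ℝ) else 0)) * S
          + (if a ∈ Y then (1:ℝ) else 0) * (x v - x u)) := by
    intro a
    rw [aalpha_mulVec, aalpha_mulVec, hdd a]
    have hsum : ∑ b, (if G'.Adj a b then (1:ℝ) else 0) * x b
        = ∑ b, (if G.Adj a b then (1:ℝ) else 0) * x b
          - (if a = u then (1:ℝ) else 0) * S
          - (if a ∈ Y then (1:ℝ) else 0) * x u
          + (if a = v then (1:ℝ) else 0) * S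
          + (if a ∈ Y then (1:ℝ) else 0) * x v := by
      simp only [E]
      simp only [add_mul, sub_mul]
      rw [Finset.sum_add_distrib, Finset.sum_add_distrib, Finset.sum_sub_distrib,
        Finset.sum_sub_distrib]
      simp only [mul_assoc, ← Finset.mul_sum]
      simp only [ite_mul, one_mul, zero_mul, mul_ite, mul_zero, Finset.sum_ite_eq',
        Finset.mem_univ, if_true]
      have hSalt : S = ∑ b, (if b ∈ Y then x b else 0) := by
        rw [hSdef]; exact Finset.sum_congr rfl fun b _ => by split_ifs <;> ring
      rw [← hSalt]
      have hn1 : ∑ b, (if a ∈ Y then (if b = u then x b else 0) else 0)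
          = (if a ∈ Y then x u else 0) := by
        split_ifs <;> simp [Finset.sum_ite_eq']
      have hn2 : ∑ b, (if a ∈ Y then (if b = v then x b else 0) else 0)
          = (if a ∈ Y then x v else 0) := by
        split_ifs <;> simp [Finset.sum_ite_eq']
      rw [hn1, hn2]
    rw [hsum]
    ring
  -- positivity facts
  have hxx : (0:ℝ) < x ⬝ᵥ x :=
    Finset.sum_pos (fun i _ => mul_pos (hx i) (hx i)) ⟨w0, Finset.mem_univ w0⟩
  have hSpos : (0:ℝ) < S := by
    rw [hSdef]
    refine Finset.sum_pos' (fun b _ => ?_) ⟨w0, Finset.mem_univ w0, ?_⟩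
    · split_ifs
      · linarith [hx b]
      · simp
    · rw [if_pos hw0, one_mul]; exact hx w0
  have hk0 : (0:ℝ) ≤ k := Finset.sum_nonneg fun b _ => by split_ifs <;> norm_num
  have hAx : (Aalpha G α).mulVec x ⬝ᵥ x = lam * (x ⬝ᵥ x) := by
    rw [hev, smul_dotProduct, smul_eq_mul]
  -- quadratic form difference
  have hquad : (Aalpha G' α).mulVec x ⬝ᵥ x = (Aalpha G α).mulVec x ⬝ᵥ x
      + α * k * ((x v + x u) * (x v - x u)) + 2 * (1-α) * S * (x v - x u) := by
    simp only [dotProduct]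
    have hstep : ∀ a ∈ Finset.univ, (Aalpha G' α).mulVec x a * x a
        = (Aalpha G α).mulVec x a * x a
          + (α * k * (x a * x a) + (1-α) * S * x a) * (if a = v then (1:ℝ) else 0)
          - (α * k * (x a * x a) + (1-α) * S * x a) * (if a = u then (1:ℝ) else 0)
          + ((1-α) * (x v - x u) * x a) * (if a ∈ Y then (1:ℝ) else 0) := by
      intro a _
      rw [hrow a]
      ring
    rw [Finset.sum_congr rfl hstep]
    rw [Finset.sum_add_distrib, Finset.sum_sub_distrib, Finset.sum_add_distrib]
    simp only [mul_ite, mul_one, mul_zero, Finset.sum_ite_eq', Finset.mem_univ, if_true]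
    have hlast : ∑ a, (if a ∈ Y then (1-α) * (x v - x u) * x a else 0)
        = (1-α) * (x v - x u) * S := by
      rw [hSdef, Finset.mul_sum]
      refine Finset.sum_congr rfl fun a _ => ?_
      split_ifs <;> ring
    rw [hlast]
    ring
  -- main inequality
  have hge : lam * (x ⬝ᵥ x) ≤ (Aalpha G' α).mulVec x ⬝ᵥ x := by
    rw [hquad, hAx]
    have t1 : (0:ℝ) ≤ α * k * ((x v + x u) * (x v - x u)) := by
      apply mul_nonneg (mul_nonneg hα0 hk0)
      apply mul_nonneg (by linarith [hx u, hx v]) (by linarith)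
    have t2 : (0:ℝ) ≤ 2 * (1-α) * S * (x v - x u) := by
      apply mul_nonneg (mul_nonneg (mul_nonneg (by norm_num) (by linarith)) (le_of_lt hSpos))
      linarith
    linarith
  have hray := quad_le' (aalphaHerm G' α) hlam' x
  by_contra hcon
  push_neg at hcon
  -- equality throughout
  have h1 := hray.1
  have h3 : lam' * (x ⬝ᵥ x) ≤ lam * (x ⬝ᵥ x) :=
    mul_le_mul_of_nonneg_right hcon (le_of_lt hxx)
  have heq : (Aalpha G' α).mulVec x ⬝ᵥ x = lam' * (x ⬝ᵥ x) := by linarith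
  have hlameq : lam' = lam := mul_right_cancel₀ (ne_of_gt hxx) (by linarith)
  have hEq := hray.2 heq
  -- contradiction at vertex u
  have hu1 : (Aalpha G' α).mulVec x u = lam * x u := by
    rw [hEq, hlameq]; simp
  have hu2 : (Aalpha G α).mulVec x u = lam * x u := by
    rw [hev]; simp
  have hru := hrow u
  rw [if_neg huv, if_pos rfl, if_neg huY, hu1, hu2] at hru
  have p1 : (0:ℝ) ≤ α * k * x u := mul_nonneg (mul_nonneg hα0 hk0) (le_of_lt (hx u))
  have p2 : (0:ℝ) < (1-α) * S := mul_pos (by linarith) hSpos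
  nlinarith [hru, p1, p2, hx u]
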